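/- There exist connected, locally finite graphs Γ and Γ′ and a quasi-isometry f from the vertex set of Γ to the vertex set of Γ′ (with respect to the graph metrics) such that Γ satisfies the Gromov condition (there is a map g from the vertices of Γ to themselves with sup_v d(g(v), v) finite and |g⁻¹(v)| ≥ 2 for every vertex v) while Γ′ fails the doubling condition (for every k ∈ ℕ there is a nonempty finite set U of vertices of Γ′ whose k-th neighborhood N^k(U) has fewer than 2·|U| elements). Consequently, the Gromov condition is not a quasi-isometry invariant of connected locally finite graphs. -/

import Mathlib

/-- Vertex type: level `n` has `2^n` vertices. -/
abbrev StmtV : Type := {p : ℕ × ℕ // p.2 < 2 ^ p.1}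

/-- Levels-clique graph: distinct vertices are adjacent iff levels differ by at most 1. -/
def StmtG : SimpleGraph StmtV where
  Adj u v := u ≠ v ∧ u.1.1 ≤ v.1.1 + 1 ∧ v.1.1 ≤ u.1.1 + 1
  symm := by constructor; intro u v h; exact ⟨h.1.symm, h.2.2, h.2.1⟩
  loopless := by constructor; intro u h; exact h.1 rfl

/-- The ray graph on ℕ. -/
def StmtG' : SimpleGraph ℕ := SimpleGraph.fromRel (fun a b => b = a + 1)

lemma stmtV_ne {p q : ℕ × ℕ} {hp : p.2 < 2 ^ p.1} {hq : q.2 < 2 ^ q.1}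
    (h : p.1 ≠ q.1) : (⟨p, hp⟩ : StmtV) ≠ ⟨q, hq⟩ := by
  intro hc; exact h (congrArg (fun x : StmtV => x.1.1) hc)

lemma stmtV_ne_snd {p q : ℕ × ℕ} {hp : p.2 < 2 ^ p.1} {hq : q.2 < 2 ^ q.1}
    (h : p.2 ≠ q.2) : (⟨p, hp⟩ : StmtV) ≠ ⟨q, hq⟩ := by
  intro hc; exact h (congrArg (fun x : StmtV => x.1.2) hc)

lemma walk_lip {V : Type*} (G : SimpleGraph V) (φ : V → ℕ)
    (h : ∀ a b, G.Adj a b → φ a ≤ φ b + 1) :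
    ∀ {u v : V} (p : G.Walk u v), φ u ≤ φ v + p.length := by
  intro u v p
  induction p with
  | nil => simp
  | @cons a x v ha p ih =>
      have h1 := h _ _ ha
      simp only [SimpleGraph.Walk.length_cons]
      omega

lemma dist_lip {V : Type*} (G : SimpleGraph V) (φ : V → ℕ)
    (h : ∀ a b, G.Adj a b → φ a ≤ φ b + 1) (hc : G.Connected) (u v : V) :
    φ u ≤ φ v + G.dist u v := by
  obtain ⟨p, hp⟩ := hc.exists_walk_length_eq_dist u v
  simpa [hp] using walk_lip G φ h p

lemma adj_dist_le {V : Type*} {G : SimpleGraph V} {u v : V} (h : G.Adj u v) :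
    G.dist u v ≤ 1 := by
  simpa using SimpleGraph.dist_le (SimpleGraph.Walk.cons h SimpleGraph.Walk.nil)

lemma stmtG'_connected : StmtG'.Connected := by
  rw [SimpleGraph.connected_iff]
  refine ⟨?_, ⟨0⟩⟩
  have key : ∀ n : ℕ, StmtG'.Reachable 0 n := by
    intro n
    induction n with
    | zero => exact SimpleGraph.Reachable.refl 0
    | succ n ih =>
        refine ih.trans (SimpleGraph.Adj.reachable ?_)
        exact ⟨by omega, Or.inl rfl⟩
  intro a b
  exact (key a).symm.trans (key b)

lemma stmtG_connected : StmtG.Connected := by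
  rw [SimpleGraph.connected_iff]
  refine ⟨?_, ⟨⟨(0,0), by norm_num⟩⟩⟩
  have key : ∀ n i (h : i < 2 ^ n), StmtG.Reachable ⟨(0,0), by norm_num⟩ ⟨(n,i), h⟩ := by
    intro n
    induction n with
    | zero =>
        intro i h
        interval_cases i
        exact SimpleGraph.Reachable.refl _
    | succ n ih =>
        intro i h
        refine (ih 0 (Nat.two_pow_pos n)).trans
          (SimpleGraph.Adj.reachable ?_)
        exact ⟨stmtV_ne (by dsimp only; omega), by dsimp only; omega, by dsimp only; omega⟩
  intro a b
  exact ((key a.1.1 a.1.2 a.2).symm.trans (key b.1.1 b.1.2 b.2))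

/-- Lower bound on ray distance. -/
lemma stmtG'_dist_lower (u v : ℕ) : u ≤ v + StmtG'.dist u v :=
  dist_lip StmtG' (fun x => x) (by rintro a b ⟨-, h | h⟩ <;> omega) stmtG'_connected u v

/-- Upper bound on ray distance. -/
lemma stmtG'_dist_upper (a k : ℕ) : StmtG'.dist a (a + k) ≤ k := by
  induction k with
  | zero => simp
  | succ k ih =>
      calc StmtG'.dist a (a + (k+1))
          ≤ StmtG'.dist a (a + k) + StmtG'.dist (a + k) (a + (k+1)) :=
            stmtG'_connected.dist_triangle
        _ ≤ k + 1 := by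
            have : StmtG'.dist (a + k) (a + (k+1)) ≤ 1 :=
              adj_dist_le ⟨by omega, Or.inl (by omega)⟩
            omega

/-- Lower bound on level difference in `StmtG`. -/
lemma stmtG_dist_lower (u v : StmtV) : u.1.1 ≤ v.1.1 + StmtG.dist u v :=
  dist_lip StmtG (fun w => w.1.1) (by rintro a b ⟨-, h1, h2⟩; exact h1) stmtG_connected u v

lemma stmtG_descend : ∀ (k : ℕ), 1 ≤ k → ∀ n i j (hi : i < 2 ^ (n + k)) (hj : j < 2 ^ n),
    StmtG.dist ⟨(n + k, i), hi⟩ ⟨(n, j), hj⟩ ≤ k := by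
  intro k
  induction k with
  | zero => omega
  | succ k ih =>
      intro _ n i j hi hj
      rcases Nat.eq_zero_or_pos k with h1 | h1
      · subst h1
        exact adj_dist_le ⟨stmtV_ne (by dsimp only; omega), by dsimp only; omega, by dsimp only; omega⟩
      · have hmid : (0 : ℕ) < 2 ^ (n + k) := Nat.two_pow_pos _
        calc StmtG.dist ⟨(n + (k+1), i), hi⟩ ⟨(n, j), hj⟩
            ≤ StmtG.dist ⟨(n + (k+1), i), hi⟩ ⟨(n + k, 0), hmid⟩
              + StmtG.dist ⟨(n + k, 0), hmid⟩ ⟨(n, j), hj⟩ := stmtG_connected.dist_triangle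
          _ ≤ 1 + k := by
              have h2 : StmtG.dist ⟨(n + (k+1), i), hi⟩ ⟨(n + k, 0), hmid⟩ ≤ 1 :=
                adj_dist_le ⟨stmtV_ne (by dsimp only; omega), by dsimp only; omega, by dsimp only; omega⟩
              have h3 := ih h1 n 0 j hmid hj
              omega
          _ = k + 1 := by omega

/-- Upper bound on `StmtG` distance: level difference plus one. -/
lemma stmtG_dist_upper (u v : StmtV) :
    StmtG.dist u v ≤ (u.1.1 - v.1.1) + (v.1.1 - u.1.1) + 1 := by
  obtain ⟨⟨n, i⟩, hi⟩ := u
  obtain ⟨⟨m, j⟩, hj⟩ := v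
  simp only at hi hj ⊢
  rcases lt_trichotomy n m with h | h | h
  · have hjm : j < 2 ^ (n + (m - n)) := by
      have : n + (m - n) = m := by omega
      rw [this]; exact hj
    have key := stmtG_descend (m - n) (by omega) n j i hjm hi
    have heq : (⟨(n + (m - n), j), hjm⟩ : StmtV) = ⟨(m, j), hj⟩ :=
      by simp only [Subtype.mk.injEq, Prod.mk.injEq, and_true, true_and]; omega
    have keq : StmtG.dist (⟨(n, i), hi⟩ : StmtV) ⟨(m, j), hj⟩
        = StmtG.dist (⟨(n + (m - n), j), hjm⟩ : StmtV) ⟨(n, i), hi⟩ := by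
      rw [heq, SimpleGraph.dist_comm]
    refine le_trans (le_of_eq keq) ?_
    omega
  · subst h
    by_cases hij : i = j
    · subst hij
      have h0 : StmtG.dist (⟨(n, i), hi⟩ : StmtV) ⟨(n, i), hj⟩ = 0 := SimpleGraph.dist_self
      omega
    · have : StmtG.dist ⟨(n, i), hi⟩ ⟨(n, j), hj⟩ ≤ 1 :=
        adj_dist_le ⟨by intro hc; exact hij (by
          have := congrArg (fun x : StmtV => x.1.2) hc; exact this),
          by dsimp only; omega, by dsimp only; omega⟩
      omega
  · have him : i < 2 ^ (m + (n - m)) := by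
      have : m + (n - m) = n := by omega
      rw [this]; exact hi
    have key := stmtG_descend (n - m) (by omega) m i j him hj
    have heq : (⟨(m + (n - m), i), him⟩ : StmtV) = ⟨(n, i), hi⟩ :=
      by simp only [Subtype.mk.injEq, Prod.mk.injEq, and_true, true_and]; omega
    have keq : StmtG.dist (⟨(n, i), hi⟩ : StmtV) ⟨(m, j), hj⟩
        = StmtG.dist (⟨(m + (n - m), i), him⟩ : StmtV) ⟨(m, j), hj⟩ := by
      rw [heq]
    refine le_trans (le_of_eq keq) ?_
    omega

/-- The parent map on `StmtV`. -/
def stmtGromov (v : StmtV) : StmtV :=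
  if h : v.1.1 = 0 then v
  else ⟨(v.1.1 - 1, v.1.2 / 2), by
    have h2 := v.2
    have h3 : v.1.1 - 1 + 1 = v.1.1 := by omega
    have : v.1.2 / 2 < 2 ^ (v.1.1 - 1) := by
      apply Nat.div_lt_of_lt_mul
      calc v.1.2 < 2 ^ v.1.1 := h2
        _ = 2 * 2 ^ (v.1.1 - 1) := by rw [← pow_succ']; rw [h3]
    exact this⟩

/-- There are connected, locally finite graphs `Γ`, `Γ′` and a
quasi-isometry `f` between their vertex sets such that `Γ` satisfies the Gromov condition
while `Γ′` fails the doubling condition. Hence the Gromov condition is not a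
quasi-isometry invariant of connected locally finite graphs. -/
theorem stmt_18 :
    ∃ (V V' : Type) (Γ : SimpleGraph V) (Γ' : SimpleGraph V') (f : V → V'),
      Γ.Connected ∧ Γ'.Connected ∧
      (∀ v : V, (Γ.neighborSet v).Finite) ∧ (∀ v' : V', (Γ'.neighborSet v').Finite) ∧
      -- `f` is a quasi-isometry
      (∃ C : ℝ, 0 < C ∧
        (∀ x y : V,
          (1 / C) * (Γ.dist x y : ℝ) - C ≤ (Γ'.dist (f x) (f y) : ℝ) ∧
          (Γ'.dist (f x) (f y) : ℝ) ≤ C * (Γ.dist x y : ℝ) + C) ∧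
        (∀ v' : V', ∃ x : V, (Γ'.dist v' (f x) : ℝ) ≤ C)) ∧
      -- `Γ` satisfies the Gromov condition
      (∃ (g : V → V) (k : ℕ),
        (∀ v, Γ.dist (g v) v ≤ k) ∧ (∀ v, ∃ u w, u ≠ w ∧ g u = v ∧ g w = v)) ∧
      -- `Γ'` fails the doubling condition
      (∀ k : ℕ, ∃ U : Finset V', U.Nonempty ∧
        ({v' : V' | ∃ u ∈ U, Γ'.dist u v' ≤ k} : Set V').ncard < 2 * U.card) := by
  refine ⟨StmtV, ℕ, StmtG, StmtG', fun v => v.1.1,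
    stmtG_connected, stmtG'_connected, ?locfin, ?locfin', ?qi, ?gromov, ?doubling⟩
  case locfin =>
    intro v
    have hbig : ({w : StmtV | w.1.1 ≤ v.1.1 + 1} : Set StmtV).Finite := by
      have hT : (Set.Iic (v.1.1 + 1) ×ˢ Set.Iio (2 ^ (v.1.1 + 1)) : Set (ℕ × ℕ)).Finite :=
        (Set.finite_Iic _).prod (Set.finite_Iio _)
      have : ({w : StmtV | w.1.1 ≤ v.1.1 + 1} : Set StmtV)
          ⊆ Subtype.val ⁻¹' (Set.Iic (v.1.1 + 1) ×ˢ Set.Iio (2 ^ (v.1.1 + 1))) := by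
        intro w hw
        refine ⟨hw, ?_⟩
        calc w.1.2 < 2 ^ w.1.1 := w.2
          _ ≤ 2 ^ (v.1.1 + 1) := Nat.pow_le_pow_right (by norm_num) hw
      exact Set.Finite.subset (hT.preimage (Subtype.val_injective.injOn)) this
    refine hbig.subset ?_
    rintro w ⟨-, -, h2⟩
    exact h2
  case locfin' =>
    intro n
    refine (Set.finite_Iic (n + 1)).subset ?_
    rintro m ⟨-, h | h⟩ <;> simp [Set.mem_Iic] <;> omega
  case qi =>
    refine ⟨2, by norm_num, ?_, ?_⟩
    · intro x y
      -- lower bound on Γ' distance in terms of levels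
      have l1 := stmtG'_dist_lower x.1.1 y.1.1
      have l2 := stmtG'_dist_lower y.1.1 x.1.1
      have l3 := stmtG_dist_lower x y
      have l4 := stmtG_dist_lower y x
      -- upper bound on Γ' distance
      have u1 : StmtG'.dist x.1.1 y.1.1 ≤ (x.1.1 - y.1.1) + (y.1.1 - x.1.1) := by
        rcases le_total x.1.1 y.1.1 with h | h
        · have := stmtG'_dist_upper x.1.1 (y.1.1 - x.1.1)
          have heq : x.1.1 + (y.1.1 - x.1.1) = y.1.1 := by omega
          rw [heq] at this
          omega
        · have := stmtG'_dist_upper y.1.1 (x.1.1 - y.1.1)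
          have heq : y.1.1 + (x.1.1 - y.1.1) = x.1.1 := by omega
          rw [heq] at this
          rw [SimpleGraph.dist_comm]
          omega
      have u2 := stmtG_dist_upper x y
      have hcomm : StmtG.dist y x = StmtG.dist x y := SimpleGraph.dist_comm ..
      have hcomm' : StmtG'.dist y.1.1 x.1.1 = StmtG'.dist x.1.1 y.1.1 := SimpleGraph.dist_comm ..
      rw [hcomm] at l4
      rw [hcomm'] at l2
      constructor
      · -- (1/2) d - 2 ≤ d'
        have key : StmtG.dist x y ≤ StmtG'.dist x.1.1 y.1.1 + 1 := by omega
        have : (StmtG.dist x y : ℝ) ≤ (StmtG'.dist x.1.1 y.1.1 : ℝ) + 1 := by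
          exact_mod_cast key
        nlinarith [Nat.cast_nonneg (α := ℝ) (StmtG.dist x y),
          Nat.cast_nonneg (α := ℝ) (StmtG'.dist x.1.1 y.1.1)]
      · -- d' ≤ 2 d + 2
        have key : StmtG'.dist x.1.1 y.1.1 ≤ StmtG.dist x y := by omega
        have : (StmtG'.dist x.1.1 y.1.1 : ℝ) ≤ (StmtG.dist x y : ℝ) := by exact_mod_cast key
        nlinarith [Nat.cast_nonneg (α := ℝ) (StmtG.dist x y)]
    · intro n
      refine ⟨⟨(n, 0), Nat.two_pow_pos _⟩, ?_⟩
      simp [SimpleGraph.dist_self]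
  case gromov =>
    refine ⟨stmtGromov, 1, ?_, ?_⟩
    · intro v
      by_cases h : v.1.1 = 0
      · simp [stmtGromov, h, SimpleGraph.dist_self]
      · have : StmtG.Adj (stmtGromov v) v := by
          refine ⟨?_, ?_, ?_⟩
          · rw [stmtGromov, dif_neg h]
            exact stmtV_ne (by dsimp only; omega)
          · rw [stmtGromov, dif_neg h]; dsimp only; omega
          · rw [stmtGromov, dif_neg h]; dsimp only; omega
        exact adj_dist_le this
    · rintro ⟨⟨n, j⟩, hj⟩
      simp only at hj
      have h1 : 2 * j < 2 ^ (n + 1) := by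
        calc 2 * j < 2 * 2 ^ n := by omega
          _ = 2 ^ (n + 1) := by rw [pow_succ]; ring
      have h2 : 2 * j + 1 < 2 ^ (n + 1) := by
        have h0 : 0 < 2 ^ n := Nat.two_pow_pos _
        calc 2 * j + 1 < 2 * 2 ^ n := by omega
          _ = 2 ^ (n + 1) := by rw [pow_succ]; ring
      refine ⟨⟨(n + 1, 2 * j), h1⟩, ⟨(n + 1, 2 * j + 1), h2⟩,
        stmtV_ne_snd (by dsimp only; omega), ?_, ?_⟩
      · rw [stmtGromov, dif_neg (by simp)]
        exact by simp only [Subtype.mk.injEq, Prod.mk.injEq, and_true, true_and]; omega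
      · rw [stmtGromov, dif_neg (by simp)]
        exact by simp only [Subtype.mk.injEq, Prod.mk.injEq, and_true, true_and]; omega
  case doubling =>
    intro k
    refine ⟨Finset.range (k + 1), ⟨0, by simp⟩, ?_⟩
    have hsub : ({v' : ℕ | ∃ u ∈ Finset.range (k + 1), StmtG'.dist u v' ≤ k} : Set ℕ)
        ⊆ Set.Iic (2 * k) := by
      rintro v ⟨u, hu, hd⟩
      have := stmtG'_dist_lower v u
      rw [SimpleGraph.dist_comm] at this
      simp only [Finset.mem_range] at hu
      simp only [Set.mem_Iic]
      omega
    calc ({v' : ℕ | ∃ u ∈ Finset.range (k + 1), StmtG'.dist u v' ≤ k} : Set ℕ).ncard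
        ≤ (Set.Iic (2 * k)).ncard := Set.ncard_le_ncard hsub (Set.finite_Iic _)
      _ = 2 * k + 1 := by
          rw [← Nat.card_coe_set_eq]
          simp [Nat.card_eq_fintype_card]
      _ < 2 * (Finset.range (k + 1)).card := by simp; omega
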